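/- arXiv:1610.00368 — 3 statements merged into one kernel-verified Lean document; each statement's English description precedes it below -/
import Mathlib

section
/- Let μ₀ be a probability measure on ℝ supported on (0,∞), and for ρ ∈ (0,1) let μ_ρ be the pushforward of μ₀ under x ↦ x/(1−ρ) (if μ₀ has density p₀, then μ_ρ has density p₁(x,ρ) = (1−ρ)p₀((1−ρ)x)). Fix c > 0 and suppose there exist K ≥ 0 and ρ₀ ∈ (0,1) such that KL(μ₀‖μ_ρ) ≤ cρ²/2 + Kρ³ for all ρ ∈ (0,ρ₀). Fix ε ∈ (0,1) and set ρ_N = ε/√(cN). Then for every sequence of measurable sets A_N ⊆ ℝ^N, liminf_{N→∞} [ μ₀^⊗N(A_N) + μ_{ρ_N}^⊗N(ℝ^N \ A_N) ] ≥ 1 − ε. (Hence Alice's buffering, which stretches the inter-arrival distribution by 1/(1−ρ_N) with ρ_N = ε/√(cN), is covert: every detector of Willie has P_FA + P_MD ≥ 1 − ε asymptotically.) -/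
open MeasureTheory ProbabilityTheory Filter
open scoped ENNReal Classical

section Aux

open Real

private lemma hell_alg (u v a b : ℝ) (hu : 0 ≤ u) (hv : 0 ≤ v) (ha : 0 ≤ a) (hb : 0 ≤ b)
    (h1 : u^2 + a^2 = 1) (h2 : v^2 + b^2 = 1) :
    (u^2 - v^2)^2 ≤ 2 - 2*(u*v + a*b) := by
  have key : (u+v)*(a+b) ≤ 2 := by
    nlinarith [sq_nonneg (u - v), sq_nonneg (a - b), sq_nonneg ((u+v)*(a+b) - 2),
      sq_nonneg (u^2+v^2-1), sq_nonneg (u+v), sq_nonneg (a+b)]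
  nlinarith [sq_nonneg ((u-v)*(a+b) - (b-a)*(u+v)), sq_nonneg ((u-v)*(a+b) + (b-a)*(u+v)),
    sq_nonneg (u-v), sq_nonneg (a-b), mul_nonneg (mul_nonneg hu hv) (mul_nonneg ha hb)]

private lemma scalar_pinsker {p q : ℝ} (hp0 : 0 ≤ p) (hp1 : p ≤ 1) (hq0 : 0 < q) (hq1 : q < 1) :
    (p - q)^2 ≤ p * Real.log (p/q) + (1-p) * Real.log ((1-p)/(1-q)) := by
  rcases eq_or_lt_of_le hp0 with h0 | hp0'
  · have hlog : Real.log (1 - q) ≤ -q := by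
      have := Real.log_le_sub_one_of_pos (by linarith : (0:ℝ) < 1 - q)
      linarith
    have h1q : Real.log ((1:ℝ)/(1-q)) = -Real.log (1-q) := by
      rw [Real.log_div one_ne_zero (by linarith), Real.log_one]; ring
    rw [← h0]
    simp only [zero_div, Real.log_zero, mul_zero, sub_zero, zero_mul, zero_add, one_mul, zero_sub]
    rw [h1q]
    nlinarith
  rcases eq_or_lt_of_le hp1 with h1 | hp1'
  · subst h1
    have hlog : Real.log q ≤ q - 1 := Real.log_le_sub_one_of_pos hq0
    have h1q : Real.log ((1:ℝ)/q) = -Real.log q := by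
      rw [Real.log_div one_ne_zero hq0.ne', Real.log_one]; ring
    simp only [sub_self, zero_div, zero_mul, add_zero, one_mul, Real.log_zero, mul_zero]
    rw [h1q]
    nlinarith
  set u := Real.sqrt p
  set v := Real.sqrt q
  set a := Real.sqrt (1-p)
  set b := Real.sqrt (1-q)
  have hu : 0 < u := Real.sqrt_pos.2 hp0'
  have hv : 0 < v := Real.sqrt_pos.2 hq0
  have ha : 0 < a := Real.sqrt_pos.2 (by linarith)
  have hb : 0 < b := Real.sqrt_pos.2 (by linarith)
  have hu2 : u^2 = p := Real.sq_sqrt hp0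
  have hv2 : v^2 = q := Real.sq_sqrt hq0.le
  have ha2 : a^2 = 1-p := Real.sq_sqrt (by linarith)
  have hb2 : b^2 = 1-q := Real.sq_sqrt (by linarith)
  set A := u*v + a*b with hA
  have hApos : 0 < A := by positivity
  have hjen : p * Real.log (v/u) + (1-p) * Real.log (b/a) ≤ Real.log A := by
    have hconc := strictConcaveOn_log_Ioi.concaveOn
    have := hconc.2 (Set.mem_Ioi.2 (div_pos hv hu)) (Set.mem_Ioi.2 (div_pos hb ha))
      hp0 (by linarith : (0:ℝ) ≤ 1 - p) (by ring)
    simp only [smul_eq_mul] at this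
    have heq : p * (v/u) + (1-p) * (b/a) = A := by
      rw [hA]
      field_simp
      linear_combination (-(v*a)) * hu2 - (b*u) * ha2
    rwa [heq] at this
  have hlogA : Real.log A ≤ A - 1 := Real.log_le_sub_one_of_pos hApos
  have hd : p * Real.log (v/u) + (1-p) * Real.log (b/a)
      = -(p * Real.log (p/q) + (1-p) * Real.log ((1-p)/(1-q)))/2 := by
    rw [Real.log_div hv.ne' hu.ne', Real.log_div hb.ne' ha.ne',
      Real.log_div (by linarith) hq0.ne', Real.log_div (by linarith) (by linarith),
      Real.log_sqrt hp0, Real.log_sqrt hq0.le, Real.log_sqrt (by linarith : (0:ℝ) ≤ 1-p),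
      Real.log_sqrt (by linarith : (0:ℝ) ≤ 1-q)]
    ring
  have halg : (p - q)^2 ≤ 2 - 2*A := by
    have := hell_alg u v a b hu.le hv.le ha.le hb.le (by rw [hu2, ha2]; ring)
      (by rw [hv2, hb2]; ring)
    rw [hu2, hv2] at this
    linarith
  linarith [hjen, hlogA, hd ▸ hjen]

private lemma set_gibbs {α : Type*} [MeasurableSpace α] (μ ν : Measure α) [IsProbabilityMeasure μ]
    [IsProbabilityMeasure ν] (hμν : μ ≪ ν) (hint : Integrable (llr μ ν) μ)
    {A : Set α} (hA : MeasurableSet A) :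
    (μ A).toReal * Real.log ((μ A).toReal / (ν A).toReal) ≤ ∫ x in A, llr μ ν x ∂μ := by
  by_cases hq : ν A = 0
  · have hp : μ A = 0 := hμν hq
    simp [hp, Measure.restrict_eq_zero.2 hp]
  have hchg : ∫ x in A, llr μ ν x ∂μ = ∫ x in A, (μ.rnDeriv ν x).toReal * llr μ ν x ∂ν := by
    rw [← MeasureTheory.setIntegral_rnDeriv_smul hμν hA]
    rfl
  set f : α → ℝ := fun x => (μ.rnDeriv ν x).toReal with hf
  have hNZ : NeZero (ν.restrict A) := by
    refine ⟨fun h => hq ?_⟩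
    rwa [Measure.restrict_eq_zero] at h
  have hfint : Integrable f (ν.restrict A) := (Measure.integrable_toReal_rnDeriv).restrict
  have hgint : Integrable (fun x => f x * Real.log (f x)) (ν.restrict A) := by
    have : Integrable (fun x => (μ.rnDeriv ν x).toReal • llr μ ν x) ν :=
      (MeasureTheory.integrable_rnDeriv_smul_iff hμν).2 hint
    exact this.restrict
  have hmem : ∀ᵐ x ∂(ν.restrict A), f x ∈ Set.Ici (0:ℝ) :=
    Filter.Eventually.of_forall fun x => ENNReal.toReal_nonneg
  have hjen := (Real.convexOn_mul_log).map_average_le (continuous_mul_log.continuousOn)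
    isClosed_Ici hmem hfint hgint
  have hνA : ((ν.restrict A) Set.univ).toReal = (ν A).toReal := by
    rw [Measure.restrict_apply_univ]
  have havg1 : ⨍ x, f x ∂(ν.restrict A) = (ν A).toReal⁻¹ * (μ A).toReal := by
    rw [average_eq, measureReal_def, hνA, Measure.setIntegral_toReal_rnDeriv hμν A, measureReal_def]
    simp [smul_eq_mul]
  have havg2 : ⨍ x, f x * Real.log (f x) ∂(ν.restrict A)
      = (ν A).toReal⁻¹ * ∫ x in A, llr μ ν x ∂μ := by
    rw [average_eq, measureReal_def, hνA, hchg]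
    simp only [smul_eq_mul]
    rfl
  rw [havg1, havg2] at hjen
  have hqpos : 0 < (ν A).toReal := ENNReal.toReal_pos hq (measure_ne_top ν A)
  set p := (μ A).toReal
  set q := (ν A).toReal
  have : q * ((q⁻¹ * p) * Real.log (q⁻¹ * p)) ≤ q * (q⁻¹ * ∫ x in A, llr μ ν x ∂μ) :=
    mul_le_mul_of_nonneg_left hjen hqpos.le
  have hqq : q * q⁻¹ = 1 := mul_inv_cancel₀ hqpos.ne'
  have hrw : q⁻¹ * p = p / q := by ring
  calc p * Real.log (p / q) = q * ((q⁻¹ * p) * Real.log (q⁻¹ * p)) := by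
        rw [hrw]; field_simp
      _ ≤ q * (q⁻¹ * ∫ x in A, llr μ ν x ∂μ) := this
      _ = ∫ x in A, llr μ ν x ∂μ := by field_simp

private lemma toReal_compl {α : Type*} [MeasurableSpace α] (μ : Measure α)
    [IsProbabilityMeasure μ] {A : Set α} (hA : MeasurableSet A) :
    (μ Aᶜ).toReal = 1 - (μ A).toReal := by
  rw [measure_compl hA (measure_ne_top μ A), measure_univ,
    ENNReal.toReal_sub_of_le prob_le_one (by simp)]
  simp

private lemma pinsker_set {α : Type*} [MeasurableSpace α] (μ ν : Measure α)
    [IsProbabilityMeasure μ] [IsProbabilityMeasure ν] (hμν : μ ≪ ν)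
    (hint : Integrable (llr μ ν) μ) {A : Set α} (hA : MeasurableSet A) :
    |(μ A).toReal - (ν A).toReal| ≤ Real.sqrt (∫ x, llr μ ν x ∂μ) := by
  set p := (μ A).toReal
  set q := (ν A).toReal
  by_cases hq0 : ν A = 0
  · have hp : μ A = 0 := hμν hq0
    simp [p, q, hp, hq0, Real.sqrt_nonneg]
  by_cases hq1 : ν Aᶜ = 0
  · have hp : μ Aᶜ = 0 := hμν hq1
    have h1 : p = 1 := by
      have := toReal_compl μ hA; simp [hp] at this; simp [p]; linarith
    have h2 : q = 1 := by
      have := toReal_compl ν hA; simp [hq1] at this; simp [q]; linarith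
    simp [h1, h2, Real.sqrt_nonneg]
  have hq0' : 0 < q := ENNReal.toReal_pos hq0 (measure_ne_top ν A)
  have hq1' : q < 1 := by
    have hcompl := toReal_compl ν hA
    have : 0 < (ν Aᶜ).toReal := ENNReal.toReal_pos hq1 (measure_ne_top ν Aᶜ)
    linarith
  have hp0 : 0 ≤ p := ENNReal.toReal_nonneg
  have hp1 : p ≤ 1 := by
    have := prob_le_one (μ := μ) (s := A)
    simpa [p] using ENNReal.toReal_le_of_le_ofReal zero_le_one (by simpa using this)
  have h1 := set_gibbs μ ν hμν hint hA
  have h2 := set_gibbs μ ν hμν hint hA.compl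
  rw [toReal_compl μ hA, toReal_compl ν hA] at h2
  have hsum : (1-p) * Real.log ((1-p)/(1-q)) + p * Real.log (p/q) ≤ ∫ x, llr μ ν x ∂μ := by
    have := integral_add_compl hA hint
    linarith [h1, h2, this]
  have hsq := scalar_pinsker hp0 hp1 hq0' hq1'
  exact Real.abs_le_sqrt (by linarith)

private lemma lintegral_pi_prod : ∀ (N : ℕ) (ν : Measure ℝ) [IsProbabilityMeasure ν]
    (h : Fin N → ℝ → ℝ≥0∞), (∀ i, Measurable (h i)) →
    ∫⁻ x, ∏ i, h i (x i) ∂(Measure.pi fun _ : Fin N => ν) = ∏ i, ∫⁻ y, h i y ∂ν := by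
  intro N
  induction N with
  | zero =>
    intro ν _ h hh
    rw [Measure.pi_of_empty]
    simp
  | succ n ih =>
    intro ν _ h hh
    have hmp := measurePreserving_piFinSuccAbove (fun _ : Fin (n+1) => ν) 0
    set e := MeasurableEquiv.piFinSuccAbove (fun _ : Fin (n+1) => ℝ) 0
    have hF : Measurable (fun p : ℝ × (Fin n → ℝ) =>
        h 0 p.1 * ∏ j, h (Fin.succ j) (p.2 j)) := by
      refine ((hh 0).comp measurable_fst).mul ?_
      exact Finset.measurable_prod _ fun j _ =>
        (hh _).comp ((measurable_pi_apply j).comp measurable_snd)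
    have hcomp : ∀ x : Fin (n+1) → ℝ,
        (fun p : ℝ × (Fin n → ℝ) => h 0 p.1 * ∏ j, h (Fin.succ j) (p.2 j)) (e x)
          = ∏ i, h i (x i) := by
      intro x
      have h1 : (e x).1 = x 0 := rfl
      have h2 : ∀ j, (e x).2 j = x ((0 : Fin (n+1)).succAbove j) := fun j => rfl
      simp only [h1, h2]
      rw [Fin.prod_univ_succAbove (fun i => h i (x i)) 0]
      congr 1
    calc ∫⁻ x, ∏ i, h i (x i) ∂(Measure.pi fun _ : Fin (n+1) => ν)
        = ∫⁻ x, (fun p : ℝ × (Fin n → ℝ) => h 0 p.1 * ∏ j, h (Fin.succ j) (p.2 j)) (e x)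
            ∂(Measure.pi fun _ : Fin (n+1) => ν) := by
          refine lintegral_congr fun x => (hcomp x).symm
      _ = ∫⁻ p, h 0 p.1 * ∏ j, h (Fin.succ j) (p.2 j)
            ∂(ν.prod (Measure.pi fun _ : Fin n => ν)) := hmp.lintegral_comp hF
      _ = (∫⁻ y, h 0 y ∂ν) * ∫⁻ z, ∏ j, h (Fin.succ j) (z j)
            ∂(Measure.pi fun _ : Fin n => ν) := by
          exact lintegral_prod_mul (hh 0).aemeasurable
            (Finset.measurable_prod _ fun j _ => (hh _).comp (measurable_pi_apply j)).aemeasurable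
      _ = (∫⁻ y, h 0 y ∂ν) * ∏ j : Fin n, ∫⁻ y, h (Fin.succ j) y ∂ν := by
          rw [ih ν (fun j => h (Fin.succ j)) (fun j => hh _)]
      _ = ∏ i, ∫⁻ y, h i y ∂ν := by
          rw [Fin.prod_univ_succ (fun i => ∫⁻ y, h i y ∂ν)]

private lemma pi_withDensity (μ ν : Measure ℝ) [IsProbabilityMeasure μ] [IsProbabilityMeasure ν]
    (hμν : μ ≪ ν) (N : ℕ) :
    (Measure.pi fun _ : Fin N => μ)
      = (Measure.pi fun _ : Fin N => ν).withDensity (fun x => ∏ i, μ.rnDeriv ν (x i)) := by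
  have hf : Measurable (μ.rnDeriv ν) := Measure.measurable_rnDeriv μ ν
  have hg : Measurable (fun x : Fin N → ℝ => ∏ i, μ.rnDeriv ν (x i)) :=
    Finset.measurable_prod _ fun i _ => hf.comp (measurable_pi_apply i)
  refine Measure.pi_eq fun s hs => ?_
  rw [withDensity_apply _ (MeasurableSet.univ_pi hs)]
  have hind : ∀ x : Fin N → ℝ, (Set.pi Set.univ s).indicator
      (fun x => ∏ i, μ.rnDeriv ν (x i)) x = ∏ i, (s i).indicator (μ.rnDeriv ν) (x i) := by
    intro x
    by_cases hx : x ∈ Set.pi Set.univ s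
    · rw [Set.indicator_of_mem hx]
      refine Finset.prod_congr rfl fun i _ => ?_
      rw [Set.indicator_of_mem (hx i (Set.mem_univ i))]
    · rw [Set.indicator_of_notMem hx]
      have : ∃ i, x i ∉ s i := by
        by_contra hcon
        push_neg at hcon
        exact hx fun i _ => hcon i
      obtain ⟨i, hi⟩ := this
      refine (Finset.prod_eq_zero (Finset.mem_univ i) ?_).symm
      rw [Set.indicator_of_notMem hi]
  rw [← lintegral_indicator (MeasurableSet.univ_pi hs) (fun x => ∏ i, μ.rnDeriv ν (x i))]
  calc ∫⁻ x, (Set.pi Set.univ s).indicator (fun x => ∏ i, μ.rnDeriv ν (x i)) x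
        ∂(Measure.pi fun _ : Fin N => ν)
      = ∫⁻ x, ∏ i, (s i).indicator (μ.rnDeriv ν) (x i) ∂(Measure.pi fun _ : Fin N => ν) :=
        lintegral_congr hind
    _ = ∏ i, ∫⁻ y, (s i).indicator (μ.rnDeriv ν) y ∂ν :=
        lintegral_pi_prod N ν _ fun i => hf.indicator (hs i)
    _ = ∏ i, μ (s i) := by
        refine Finset.prod_congr rfl fun i _ => ?_
        rw [lintegral_indicator (hs i) _, Measure.setLIntegral_rnDeriv hμν]

private lemma pi_map_eval (μ : Measure ℝ) [IsProbabilityMeasure μ] (N : ℕ) (i : Fin N) :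
    Measure.map (fun x : Fin N → ℝ => x i) (Measure.pi fun _ : Fin N => μ) = μ := by
  ext s hs
  rw [Measure.map_apply (measurable_pi_apply i) hs, Set.eval_preimage, Measure.pi_pi]
  rw [Fintype.prod_eq_single i (fun j hj => by rw [Function.update_of_ne hj]; exact measure_univ)]
  rw [Function.update_self]

private lemma pi_pinsker (μ ν : Measure ℝ) [IsProbabilityMeasure μ] [IsProbabilityMeasure ν]
    (hμν : μ ≪ ν) (hint : Integrable (llr μ ν) μ) (N : ℕ)
    {A : Set (Fin N → ℝ)} (hA : MeasurableSet A) :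
    |((Measure.pi fun _ : Fin N => μ) A).toReal - ((Measure.pi fun _ : Fin N => ν) A).toReal|
      ≤ Real.sqrt (N * ∫ x, llr μ ν x ∂μ) := by
  set f := μ.rnDeriv ν with hfdef
  have hf : Measurable f := Measure.measurable_rnDeriv μ ν
  set g : (Fin N → ℝ) → ℝ≥0∞ := fun x => ∏ i, f (x i) with hgdef
  have hg : Measurable g := Finset.measurable_prod _ fun i _ => hf.comp (measurable_pi_apply i)
  have hpi := pi_withDensity μ ν hμν N
  have hacN : (Measure.pi fun _ : Fin N => μ) ≪ (Measure.pi fun _ : Fin N => ν) := by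
    rw [hpi]; exact withDensity_absolutelyContinuous _ _
  have hrn : (Measure.pi fun _ : Fin N => μ).rnDeriv (Measure.pi fun _ : Fin N => ν)
      =ᵐ[Measure.pi fun _ : Fin N => ν] g := by
    have := Measure.rnDeriv_withDensity (Measure.pi fun _ : Fin N => ν) hg
    rw [← hpi] at this
    exact this
  have hone : ∀ᵐ y ∂μ, 0 < f y ∧ f y ≠ ⊤ :=
    (Measure.rnDeriv_pos hμν).and (hμν.ae_le (Measure.rnDeriv_ne_top μ ν))
  have hgood : ∀ᵐ x ∂(Measure.pi fun _ : Fin N => μ), ∀ i, 0 < f (x i) ∧ f (x i) ≠ ⊤ := by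
    rw [ae_all_iff]
    intro i
    rw [ae_iff] at hone ⊢
    exact Measure.pi_eval_preimage_null (μ := fun _ : Fin N => μ) (i := i) hone
  have hllr : llr (Measure.pi fun _ : Fin N => μ) (Measure.pi fun _ : Fin N => ν)
      =ᵐ[Measure.pi fun _ : Fin N => μ] fun x => ∑ i, llr μ ν (x i) := by
    filter_upwards [hacN.ae_le hrn, hgood] with x hx hx2
    rw [llr, hx, hgdef]
    simp only []
    rw [ENNReal.toReal_prod, Real.log_prod]
    · rfl
    · intro i _
      exact (ENNReal.toReal_pos (hx2 i).1.ne' (hx2 i).2).ne'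
  have hcomp : ∀ i : Fin N, Integrable (fun x : Fin N → ℝ => llr μ ν (x i))
      (Measure.pi fun _ : Fin N => μ) := by
    intro i
    have := (integrable_map_measure (f := fun x : Fin N → ℝ => x i) (g := llr μ ν)
      (by rw [pi_map_eval μ N i]; exact hint.aestronglyMeasurable)
      (measurable_pi_apply i).aemeasurable)
    rw [pi_map_eval μ N i] at this
    exact this.1 hint
  have hintN : Integrable (llr (Measure.pi fun _ : Fin N => μ) (Measure.pi fun _ : Fin N => ν))
      (Measure.pi fun _ : Fin N => μ) := by
    refine (integrable_finset_sum Finset.univ fun i _ => hcomp i).congr hllr.symm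
  have hDN : ∫ x, llr (Measure.pi fun _ : Fin N => μ) (Measure.pi fun _ : Fin N => ν) x
      ∂(Measure.pi fun _ : Fin N => μ) = N * ∫ y, llr μ ν y ∂μ := by
    rw [integral_congr_ae hllr, integral_finset_sum Finset.univ fun i _ => hcomp i]
    have : ∀ i : Fin N, ∫ x, llr μ ν (x i) ∂(Measure.pi fun _ : Fin N => μ)
        = ∫ y, llr μ ν y ∂μ := by
      intro i
      rw [← pi_map_eval μ N i, integral_map (measurable_pi_apply i).aemeasurable]
      · rw [pi_map_eval μ N i]
      · rw [pi_map_eval μ N i]; exact hint.aestronglyMeasurable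
    simp only [this, Finset.sum_const, Finset.card_univ, Fintype.card_fin, nsmul_eq_mul]
  have := pinsker_set (Measure.pi fun _ : Fin N => μ) (Measure.pi fun _ : Fin N => ν)
    hacN hintN hA
  rwa [hDN] at this

end Aux

/-- The Kullback–Leibler divergence `KL(μ‖ν) ∈ [0,∞]`. -/
noncomputable def klDiv {Ω : Type*} [MeasurableSpace Ω] (μ ν : Measure Ω) : ℝ≥0∞ :=
  if μ ≪ ν ∧ Integrable (llr μ ν) μ then ENNReal.ofReal (∫ x, llr μ ν x ∂μ) else ∞

/-- Let `μ₀` be a probability measure on `ℝ` supported on `(0,∞)`, and for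
`ρ ∈ (0,1)` let `μ_ρ` be the pushforward of `μ₀` under `x ↦ x/(1−ρ)`.  Suppose
`KL(μ₀‖μ_ρ) ≤ cρ²/2 + Kρ³` for all small `ρ`, and set `ρ_N = ε/√(cN)` with `ε ∈ (0,1)`.
Then for every sequence of measurable sets `A_N ⊆ ℝ^N`,
`liminf_N [μ₀^⊗N(A_N) + μ_{ρ_N}^⊗N(A_Nᶜ)] ≥ 1 − ε`. -/
theorem stmt_2 (μ₀ : Measure ℝ) [IsProbabilityMeasure μ₀]
    (hsupp : μ₀ {x : ℝ | x ≤ 0} = 0)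
    (c : ℝ) (hc : 0 < c)
    (hKL : ∃ K : ℝ, 0 ≤ K ∧ ∃ ρ₀ ∈ Set.Ioo (0:ℝ) 1, ∀ ρ ∈ Set.Ioo (0:ℝ) ρ₀,
      klDiv μ₀ (Measure.map (fun x : ℝ => x / (1 - ρ)) μ₀) ≤
        ENNReal.ofReal (c * ρ ^ 2 / 2 + K * ρ ^ 3))
    (ε : ℝ) (hε : ε ∈ Set.Ioo (0:ℝ) 1)
    (A : (N : ℕ) → Set (Fin N → ℝ)) (hA : ∀ N, MeasurableSet (A N)) :
    1 - ENNReal.ofReal ε ≤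
      Filter.liminf
        (fun N : ℕ =>
          (Measure.pi fun _ : Fin N => μ₀) (A N) +
            (Measure.pi fun _ : Fin N =>
              Measure.map (fun x : ℝ => x / (1 - ε / Real.sqrt (c * N))) μ₀) ((A N)ᶜ))
        atTop := by
  obtain ⟨hε0, hε1⟩ := hε
  obtain ⟨K, hK0, ρ₀, hρ₀, hbound⟩ := hKL
  have hρ₀0 := hρ₀.1
  -- notation
  set ρ : ℕ → ℝ := fun N => ε / Real.sqrt (c * N) with hρdef
  set ν : ℕ → Measure ℝ := fun N => Measure.map (fun x : ℝ => x / (1 - ρ N)) μ₀ with hνdef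
  have hprob : ∀ N, IsProbabilityMeasure (ν N) := fun N =>
    Measure.isProbabilityMeasure_map (measurable_id.div_const _).aemeasurable
  -- tendsto facts
  have hsqrt : Tendsto (fun N : ℕ => Real.sqrt (c * N)) atTop atTop := by
    have h2 : Tendsto (fun N : ℕ => c * (N:ℝ)) atTop atTop :=
      (tendsto_natCast_atTop_atTop (R := ℝ)).const_mul_atTop hc
    have hs : Tendsto Real.sqrt atTop atTop := by
      refine tendsto_atTop_atTop.2 fun b => ⟨b^2, fun a ha => ?_⟩
      refine le_trans (le_abs_self b) ?_
      rw [← Real.sqrt_sq_eq_abs]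
      exact Real.sqrt_le_sqrt ha
    exact hs.comp h2
  have hρ0 : Tendsto ρ atTop (nhds 0) := tendsto_const_nhds.div_atTop hsqrt
  have hterm2 : Tendsto (fun N : ℕ => K * ε^3 / (c * Real.sqrt (c * N))) atTop (nhds 0) :=
    tendsto_const_nhds.div_atTop (hsqrt.const_mul_atTop hc)
  have E1 : ∀ᶠ N : ℕ in atTop, 1 ≤ N := eventually_ge_atTop 1
  have E2 : ∀ᶠ N : ℕ in atTop, ρ N < ρ₀ := hρ0.eventually (gt_mem_nhds hρ₀0)
  have E3 : ∀ᶠ N : ℕ in atTop, K * ε^3 / (c * Real.sqrt (c * N)) < ε^2/4 :=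
    hterm2.eventually (gt_mem_nhds (by positivity))
  refine Filter.le_liminf_of_le (by isBoundedDefault) ?_
  filter_upwards [E1, E2, E3] with N h1 h2 h3
  haveI := hprob N
  -- basic positivity
  have hN0 : (0:ℝ) < N := by exact_mod_cast h1
  have hsq0 : 0 < Real.sqrt (c * N) := Real.sqrt_pos.2 (by positivity)
  have hρpos : 0 < ρ N := div_pos hε0 hsq0
  -- KL bound at ρ N
  have hklN := hbound (ρ N) ⟨hρpos, h2⟩
  have hbnn : (0:ℝ) ≤ c * (ρ N)^2 / 2 + K * (ρ N)^3 := by positivity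
  have hcond : μ₀ ≪ ν N ∧ Integrable (llr μ₀ (ν N)) μ₀ := by
    by_contra hcon
    rw [klDiv, if_neg hcon] at hklN
    exact absurd (lt_of_le_of_lt hklN ENNReal.ofReal_lt_top) (lt_irrefl ⊤)
  obtain ⟨hac, hint⟩ := hcond
  rw [klDiv, if_pos ⟨hac, hint⟩] at hklN
  have hD : ∫ x, llr μ₀ (ν N) x ∂μ₀ ≤ c * (ρ N)^2 / 2 + K * (ρ N)^3 :=
    (ENNReal.ofReal_le_ofReal_iff hbnn).1 hklN
  -- N * bound ≤ ε²
  have hsqsq : Real.sqrt (c * N) ^ 2 = c * N := Real.sq_sqrt (by positivity)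
  have hid1 : (N:ℝ) * (c * (ρ N)^2 / 2) = ε^2/2 := by
    rw [hρdef]
    simp only [div_pow]
    rw [hsqsq]
    field_simp
  have hid2 : (N:ℝ) * (K * (ρ N)^3) = K * ε^3 / (c * Real.sqrt (c * N)) := by
    rw [hρdef]
    simp only [div_pow]
    have h3' : Real.sqrt (c * N) ^ 3 = (c * N) * Real.sqrt (c * N) := by
      rw [pow_succ, hsqsq]
    rw [h3']
    field_simp
  have hNB : (N:ℝ) * ∫ x, llr μ₀ (ν N) x ∂μ₀ ≤ ε^2 := by
    have := mul_le_mul_of_nonneg_left hD (le_of_lt hN0)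
    rw [mul_add, hid1, hid2] at this
    nlinarith
  -- Pinsker
  have hpins := pi_pinsker μ₀ (ν N) hac hint N (hA N)
  have habs : |((Measure.pi fun _ : Fin N => μ₀) (A N)).toReal
      - ((Measure.pi fun _ : Fin N => ν N) (A N)).toReal| ≤ ε := by
    refine hpins.trans ?_
    calc Real.sqrt ((N:ℝ) * ∫ x, llr μ₀ (ν N) x ∂μ₀) ≤ Real.sqrt (ε^2) :=
          Real.sqrt_le_sqrt hNB
      _ = ε := Real.sqrt_sq hε0.le
  -- conclude in ℝ≥0∞
  set p := ((Measure.pi fun _ : Fin N => μ₀) (A N)).toReal with hpdef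
  set q := ((Measure.pi fun _ : Fin N => ν N) (A N)).toReal with hqdef
  have hp0 : 0 ≤ p := ENNReal.toReal_nonneg
  have hq1 : q ≤ 1 := by
    have := prob_le_one (μ := Measure.pi fun _ : Fin N => ν N) (s := A N)
    simpa [hqdef] using ENNReal.toReal_le_of_le_ofReal zero_le_one (by simpa using this)
  have hμA : (Measure.pi fun _ : Fin N => μ₀) (A N) = ENNReal.ofReal p :=
    (ENNReal.ofReal_toReal (measure_ne_top _ _)).symm
  have hνAc : (Measure.pi fun _ : Fin N => ν N) ((A N)ᶜ) = ENNReal.ofReal (1 - q) := by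
    rw [← toReal_compl (Measure.pi fun _ : Fin N => ν N) (hA N)]
    exact (ENNReal.ofReal_toReal (measure_ne_top _ _)).symm
  rw [hμA, hνAc, ← ENNReal.ofReal_add hp0 (by linarith)]
  have : (1:ℝ≥0∞) - ENNReal.ofReal ε = ENNReal.ofReal (1 - ε) := by
    rw [ENNReal.ofReal_sub 1 hε0.le, ENNReal.ofReal_one]
  rw [this]
  refine ENNReal.ofReal_le_ofReal ?_
  have : q - p ≤ ε := by
    have := abs_le.1 habs
    linarith [this.1]
  linarith
end

section
/- Let λ > 0 and let (A_i)_{i≥1} be i.i.d. strictly positive random variables with mean 1/λ and finite variance σ² ∈ (0,∞). Let α ∈ (0,1), let (ρ_N)_{N≥1} ⊆ (0,1) satisfy √N·ρ_N → ∞ as N → ∞, and set U_N = √(N·σ²/α). Consider the threshold test that rejects H₀ exactly when the observed sum of N inter-arrival times exceeds N/λ + U_N. Then: (i) for every N, P( Σ_{i=1}^{N} A_i > N/λ + U_N ) ≤ α (false-alarm probability at most α); and (ii) lim_{N→∞} P( (1/(1−ρ_N))·Σ_{i=1}^{N} A_i ≤ N/λ + U_N ) = 0 (missed-detection probability tends to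 0). Hence if Alice slows the stream by 1/(1−ρ_N) with ρ_N = ω(1/√N) — i.e., buffers ω(√N) packets — Willie can detect her with arbitrarily small P_FA + P_MD. -/
open MeasureTheory ProbabilityTheory Filter
open scoped ENNReal

section aux

variable {Ω : Type*} [MeasureSpace Ω] [IsProbabilityMeasure (ℙ : Measure Ω)]

/-- Chebyshev for the sum of N iid L² variables. -/
lemma cheb_sum (lam σ : ℝ)
    (A : ℕ → Ω → ℝ)
    (hindep : iIndepFun A ℙ)
    (hident : ∀ i, IdentDistrib (A i) (A 0) ℙ ℙ)
    (hL2 : MemLp (A 0) 2 ℙ)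
    (hmean : ∫ ω, A 0 ω ∂(ℙ : Measure Ω) = 1 / lam)
    (hvar : variance (A 0) ℙ = σ ^ 2)
    (N : ℕ) {c : ℝ} (hc : 0 < c) :
    (ℙ : Measure Ω) {ω | c ≤ |(∑ i ∈ Finset.range N, A i ω) - (N : ℝ) / lam|} ≤
      ENNReal.ofReal ((N : ℝ) * σ ^ 2 / c ^ 2) := by
  have hL2i : ∀ i, MemLp (A i) 2 ℙ := fun i => (hident i).symm.memLp_snd hL2
  have hSmem : MemLp (∑ i ∈ Finset.range N, A i) 2 ℙ :=
    memLp_finset_sum' _ (fun i _ => hL2i i)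
  have hmeanS : ∫ ω, (∑ i ∈ Finset.range N, A i) ω ∂(ℙ : Measure Ω) = (N : ℝ) / lam := by
    simp only [Finset.sum_apply]
    rw [integral_finset_sum _ (fun i _ => (hL2i i).integrable one_le_two)]
    have h : ∀ i ∈ Finset.range N, ∫ ω, A i ω ∂(ℙ : Measure Ω) = 1 / lam := by
      intro i _; rw [(hident i).integral_eq, hmean]
    rw [Finset.sum_congr rfl h]
    simp [div_eq_mul_inv]
  have hvarS : variance (∑ i ∈ Finset.range N, A i) ℙ = (N : ℝ) * σ ^ 2 := by
    rw [IndepFun.variance_sum (fun i _ => hL2i i)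
      (fun i _ j _ hij => hindep.indepFun hij)]
    have h : ∀ i ∈ Finset.range N, variance (A i) ℙ = σ ^ 2 := fun i _ =>
      (hident i).variance_eq.trans hvar
    rw [Finset.sum_congr rfl h]
    simp [mul_comm]
  have h := meas_ge_le_variance_div_sq hSmem hc
  rw [hmeanS, hvarS] at h
  simpa [Finset.sum_apply] using h

end aux

/-- converse for buffering: Let `(A i)` be i.i.d., strictly positive, with
mean `1/λ` and variance `σ² ∈ (0,∞)`.  Let `α ∈ (0,1)`, `ρ_N ∈ (0,1)` with
`√N·ρ_N → ∞`, and `U_N = √(Nσ²/α)`.  Then Willie's threshold test (reject `H₀` when the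
sum of the `N` inter-arrival times exceeds `N/λ + U_N`) has false-alarm probability at
most `α` for every `N`, and missed-detection probability tending to `0`. -/
theorem stmt_6 {Ω : Type*} [MeasureSpace Ω] [IsProbabilityMeasure (ℙ : Measure Ω)]
    (lam σ : ℝ) (hlam : 0 < lam) (hσ : 0 < σ)
    (A : ℕ → Ω → ℝ)
    (hmeas : ∀ i, Measurable (A i))
    (hindep : iIndepFun A ℙ)
    (hident : ∀ i, IdentDistrib (A i) (A 0) ℙ ℙ)
    (hpos : ∀ i, ∀ᵐ ω ∂(ℙ : Measure Ω), 0 < A i ω)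
    (hL2 : MemLp (A 0) 2 ℙ)
    (hmean : ∫ ω, A 0 ω ∂(ℙ : Measure Ω) = 1 / lam)
    (hvar : variance (A 0) ℙ = σ ^ 2)
    (α : ℝ) (hα : α ∈ Set.Ioo (0:ℝ) 1)
    (ρ : ℕ → ℝ) (hρ : ∀ N, ρ N ∈ Set.Ioo (0:ℝ) 1)
    (hρω : Tendsto (fun N : ℕ => Real.sqrt N * ρ N) atTop atTop)
    (U : ℕ → ℝ) (hU : ∀ N, U N = Real.sqrt (N * σ ^ 2 / α)) :
    (∀ N : ℕ,
        (ℙ : Measure Ω) {ω | (N : ℝ) / lam + U N < ∑ i ∈ Finset.range N, A i ω} ≤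
          ENNReal.ofReal α) ∧
      Tendsto
        (fun N : ℕ =>
          (ℙ : Measure Ω)
            {ω | (1 / (1 - ρ N)) * ∑ i ∈ Finset.range N, A i ω ≤ (N : ℝ) / lam + U N})
        atTop (nhds 0) := by
  obtain ⟨hα0, hα1⟩ := hα
  have hUeq : ∀ N : ℕ, U N = Real.sqrt N * σ / Real.sqrt α := by
    intro N
    rw [hU N, Real.sqrt_div (by positivity), Real.sqrt_mul (Nat.cast_nonneg N),
      Real.sqrt_sq hσ.le]
  have hUnn : ∀ N : ℕ, 0 ≤ U N := fun N => (hU N) ▸ Real.sqrt_nonneg _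
  constructor
  · -- false alarm
    intro N
    rcases Nat.eq_zero_or_pos N with rfl | hN
    · have hempty : {ω : Ω | (0 : ℝ) / lam + U 0 < ∑ i ∈ Finset.range 0, A i ω} = ∅ := by
        ext ω
        simp [hU 0]
      simp only [Nat.cast_zero]
      rw [hempty]
      simp
    · have hNpos : (0:ℝ) < N := Nat.cast_pos.mpr hN
      have hUp : 0 < U N := by
        rw [hU N]; apply Real.sqrt_pos.mpr; positivity
      have hsub : {ω : Ω | (N : ℝ) / lam + U N < ∑ i ∈ Finset.range N, A i ω} ⊆
          {ω : Ω | U N ≤ |(∑ i ∈ Finset.range N, A i ω) - (N : ℝ) / lam|} := by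
        intro ω hω
        simp only [Set.mem_setOf_eq] at hω ⊢
        exact le_abs.mpr (Or.inl (by linarith))
      calc (ℙ : Measure Ω) {ω | (N : ℝ) / lam + U N < ∑ i ∈ Finset.range N, A i ω}
          ≤ (ℙ : Measure Ω) {ω | U N ≤ |(∑ i ∈ Finset.range N, A i ω) - (N : ℝ) / lam|} :=
            measure_mono hsub
        _ ≤ ENNReal.ofReal ((N : ℝ) * σ ^ 2 / (U N) ^ 2) :=
            cheb_sum lam σ A hindep hident hL2 hmean hvar N hUp
        _ = ENNReal.ofReal α := by
            congr 1
            have hsq : (U N) ^ 2 = (N : ℝ) * σ ^ 2 / α := by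
              rw [hU N]; exact Real.sq_sqrt (by positivity)
            rw [hsq]
            field_simp
  · -- missed detection
    set b : ℕ → ℝ := fun N => Real.sqrt N * ρ N / lam - σ / Real.sqrt α with hb
    have hbt : Tendsto b atTop atTop := by
      have h1 : Tendsto (fun N : ℕ => Real.sqrt N * ρ N / lam) atTop atTop :=
        hρω.atTop_div_const hlam
      simpa [hb, sub_eq_add_neg] using tendsto_atTop_add_const_right atTop (-(σ / Real.sqrt α)) h1
    have hev : ∀ᶠ N : ℕ in atTop, 1 ≤ N ∧ 0 < b N :=
      (eventually_ge_atTop 1).and (hbt.eventually_gt_atTop 0)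
    have hbound : ∀ᶠ N : ℕ in atTop,
        (ℙ : Measure Ω)
            {ω | (1 / (1 - ρ N)) * ∑ i ∈ Finset.range N, A i ω ≤ (N : ℝ) / lam + U N} ≤
          ENNReal.ofReal (σ ^ 2 / (b N) ^ 2) := by
      filter_upwards [hev] with N hN
      obtain ⟨hN1, hbN⟩ := hN
      have hNpos : (0:ℝ) < N := Nat.cast_pos.mpr hN1
      have hsN : 0 < Real.sqrt N := Real.sqrt_pos.mpr hNpos
      have hNN : Real.sqrt N * Real.sqrt N = (N : ℝ) := Real.mul_self_sqrt (Nat.cast_nonneg N)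
      have hρN := hρ N
      have hc : 0 < Real.sqrt N * b N := mul_pos hsN hbN
      have hkey : Real.sqrt N * b N ≤ ρ N * ((N : ℝ) / lam) - (1 - ρ N) * U N := by
        have hx : Real.sqrt N * b N = ρ N * ((N : ℝ) / lam) - U N := by
          simp only [hb]
          rw [hUeq N]
          linear_combination (ρ N / lam) * hNN
        have : ρ N * U N ≥ 0 := mul_nonneg hρN.1.le (hUnn N)
        linarith [hx]
      have hsub : {ω : Ω | (1 / (1 - ρ N)) * ∑ i ∈ Finset.range N, A i ω ≤ (N : ℝ) / lam + U N}
          ⊆ {ω : Ω | Real.sqrt N * b N ≤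
              |(∑ i ∈ Finset.range N, A i ω) - (N : ℝ) / lam|} := by
        intro ω hω
        simp only [Set.mem_setOf_eq] at hω ⊢
        have h1ρ : 0 < 1 - ρ N := by linarith [hρN.2]
        have hS : ∑ i ∈ Finset.range N, A i ω ≤ (1 - ρ N) * ((N : ℝ) / lam + U N) := by
          have := mul_le_mul_of_nonneg_left hω h1ρ.le
          rw [← mul_assoc, mul_one_div, div_self h1ρ.ne', one_mul] at this
          exact this
        have hexp : (1 - ρ N) * ((N : ℝ) / lam + U N) =
            (N : ℝ) / lam - (ρ N * ((N : ℝ) / lam) - (1 - ρ N) * U N) := by ring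
        exact le_abs.mpr (Or.inr (by rw [neg_sub]; linarith))
      calc (ℙ : Measure Ω)
            {ω | (1 / (1 - ρ N)) * ∑ i ∈ Finset.range N, A i ω ≤ (N : ℝ) / lam + U N}
          ≤ (ℙ : Measure Ω) {ω | Real.sqrt N * b N ≤
              |(∑ i ∈ Finset.range N, A i ω) - (N : ℝ) / lam|} := measure_mono hsub
        _ ≤ ENNReal.ofReal ((N : ℝ) * σ ^ 2 / (Real.sqrt N * b N) ^ 2) :=
            cheb_sum lam σ A hindep hident hL2 hmean hvar N hc
        _ = ENNReal.ofReal (σ ^ 2 / (b N) ^ 2) := by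
            congr 1
            rw [mul_pow, Real.sq_sqrt (Nat.cast_nonneg N),
              mul_div_mul_left _ _ hNpos.ne']
    have hup : Tendsto (fun N : ℕ => ENNReal.ofReal (σ ^ 2 / (b N) ^ 2)) atTop (nhds 0) := by
      have hb2 : Tendsto (fun N : ℕ => (b N) ^ 2) atTop atTop := by
        have := hbt.atTop_mul_atTop₀ hbt
        simpa [pow_two] using this
      have hr : Tendsto (fun N : ℕ => σ ^ 2 / (b N) ^ 2) atTop (nhds 0) :=
        Tendsto.div_atTop tendsto_const_nhds hb2
      have := ENNReal.tendsto_ofReal hr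
      simpa using this
    exact tendsto_of_tendsto_of_tendsto_of_le_of_le' tendsto_const_nhds hup
      (Eventually.of_forall fun N => zero_le) hbound
end

section
/- Let λ > 0 and let (A_i)_{i≥1} be i.i.d. strictly positive random variables with mean 1/λ and finite variance σ² ∈ (0,∞). Let α ∈ (0,1), let (ρ_N)_{N≥1} ⊆ (0,1) satisfy √N·ρ_N → ∞ as N → ∞, and set U_N = √(N·σ²/α). Consider the threshold test that rejects H₀ exactly when the observed sum of N inter-arrival times is below N/λ − U_N. Then: (i) for every N, P( Σ_{i=1}^{N} A_i < N/λ − U_N ) ≤ α (false-alarm probability at most α); and (ii) lim_{N→∞} P( (1−ρ_N)·Σ_{i=1}^{N} A_i ≥ N/λ − U_N ) = 0 (missed-detection probability tends to 0). Hence if Alice inserts ω(√N) covert packets — which compresses the inter-arrival times by the factor (1−ρ_N) with ρ_N = ω(1/√N) — Willie can detect her with arbitrarily small P_FA + P_MD. -/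
open MeasureTheory ProbabilityTheory Filter
open scoped ENNReal

/-- converse for packet insertion: Let `(A i)` be i.i.d., strictly
positive, with mean `1/λ` and variance `σ² ∈ (0,∞)`.  Let `α ∈ (0,1)`, `ρ_N ∈ (0,1)`
with `√N·ρ_N → ∞`, and `U_N = √(Nσ²/α)`.  Then the threshold test that rejects `H₀`
when the sum of `N` inter-arrival times is below `N/λ − U_N` has false-alarm
probability at most `α` for every `N`, and missed-detection probability (under the
compressed alternative, where the sum is `(1−ρ_N)·Σ A_i`) tending to `0`. -/
theorem stmt_11 {Ω : Type*} [MeasureSpace Ω] [IsProbabilityMeasure (ℙ : Measure Ω)]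
    (lam σ : ℝ) (hlam : 0 < lam) (hσ : 0 < σ)
    (A : ℕ → Ω → ℝ)
    (hmeas : ∀ i, Measurable (A i))
    (hindep : iIndepFun A ℙ)
    (hident : ∀ i, IdentDistrib (A i) (A 0) ℙ ℙ)
    (hpos : ∀ i, ∀ᵐ ω ∂(ℙ : Measure Ω), 0 < A i ω)
    (hL2 : MemLp (A 0) 2 ℙ)
    (hmean : ∫ ω, A 0 ω ∂(ℙ : Measure Ω) = 1 / lam)
    (hvar : variance (A 0) ℙ = σ ^ 2)
    (α : ℝ) (hα : α ∈ Set.Ioo (0:ℝ) 1)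
    (ρ : ℕ → ℝ) (hρ : ∀ N, ρ N ∈ Set.Ioo (0:ℝ) 1)
    (hρω : Tendsto (fun N : ℕ => Real.sqrt N * ρ N) atTop atTop)
    (U : ℕ → ℝ) (hU : ∀ N, U N = Real.sqrt (N * σ ^ 2 / α)) :
    (∀ N : ℕ,
        (ℙ : Measure Ω) {ω | ∑ i ∈ Finset.range N, A i ω < (N : ℝ) / lam - U N} ≤
          ENNReal.ofReal α) ∧
      Tendsto
        (fun N : ℕ =>
          (ℙ : Measure Ω)
            {ω | (N : ℝ) / lam - U N ≤ (1 - ρ N) * ∑ i ∈ Finset.range N, A i ω})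
        atTop (nhds 0) := by
  obtain ⟨hα0, hα1⟩ := hα
  have hL2i : ∀ i, MemLp (A i) 2 ℙ := fun i => (hident i).symm.memLp_snd hL2
  have hL2S : ∀ N, MemLp (fun ω => ∑ i ∈ Finset.range N, A i ω) 2 ℙ := fun N =>
    memLp_finset_sum (Finset.range N) (fun i _ => hL2i i)
  have hmeanS : ∀ N : ℕ, ∫ ω, (∑ i ∈ Finset.range N, A i ω) ∂(ℙ : Measure Ω)
      = (N : ℝ) / lam := by
    intro N
    rw [integral_finset_sum _ (fun i _ => (hL2i i).integrable one_le_two)]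
    have h1 : ∀ i ∈ Finset.range N, ∫ ω, A i ω ∂(ℙ : Measure Ω) = 1 / lam := fun i _ => by
      rw [(hident i).integral_eq, hmean]
    rw [Finset.sum_congr rfl h1, Finset.sum_const, Finset.card_range, nsmul_eq_mul]
    ring
  have hvarS : ∀ N : ℕ, variance (fun ω => ∑ i ∈ Finset.range N, A i ω) ℙ
      = (N : ℝ) * σ ^ 2 := by
    intro N
    have hfun : (fun ω => ∑ i ∈ Finset.range N, A i ω) = ∑ i ∈ Finset.range N, A i := by
      funext ω; simp
    rw [hfun, IndepFun.variance_sum (fun i _ => hL2i i)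
      (fun i _ j _ hij => hindep.indepFun hij)]
    have h2 : ∀ i ∈ Finset.range N, variance (A i) ℙ = σ ^ 2 := fun i _ => by
      rw [(hident i).variance_eq, hvar]
    rw [Finset.sum_congr rfl h2, Finset.sum_const, Finset.card_range, nsmul_eq_mul]
  have cheb : ∀ N : ℕ, ∀ c : ℝ, 0 < c →
      (ℙ : Measure Ω) {ω | c ≤ |(∑ i ∈ Finset.range N, A i ω) - (N : ℝ) / lam|}
        ≤ ENNReal.ofReal ((N : ℝ) * σ ^ 2 / c ^ 2) := by
    intro N c hc
    have h := meas_ge_le_variance_div_sq (μ := ℙ) (hL2S N) hc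
    rw [hvarS N] at h
    rw [show (ℙ[fun ω => ∑ i ∈ Finset.range N, A i ω] : ℝ) = (N : ℝ) / lam from hmeanS N] at h
    exact h
  constructor
  · -- false alarm
    intro N
    rcases Nat.eq_zero_or_pos N with hN | hN
    · subst hN
      have : {ω : Ω | ∑ i ∈ Finset.range 0, A i ω < ((0:ℕ) : ℝ) / lam - U 0} = ∅ := by
        ext ω; simp [hU]
      rw [this]
      simp [ENNReal.ofReal_pos.2 hα0, le_of_lt]
    · have hNpos : (0 : ℝ) < N := by exact_mod_cast hN
      have hUU : (U N) ^ 2 = (N : ℝ) * σ ^ 2 / α := by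
        rw [hU, Real.sq_sqrt (by positivity)]
      have hUpos : 0 < U N := by
        rw [hU]; apply Real.sqrt_pos.2; positivity
      have hsub : {ω : Ω | ∑ i ∈ Finset.range N, A i ω < (N : ℝ) / lam - U N}
          ⊆ {ω | U N ≤ |(∑ i ∈ Finset.range N, A i ω) - (N : ℝ) / lam|} := by
        intro ω hω
        simp only [Set.mem_setOf_eq] at hω ⊢
        have h1 := le_abs_self ((N : ℝ) / lam - ∑ i ∈ Finset.range N, A i ω)
        rw [abs_sub_comm]
        linarith
      refine le_trans (measure_mono hsub) (le_trans (cheb N (U N) hUpos) ?_)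
      apply le_of_eq
      congr 1
      rw [hUU, div_div_cancel₀ (by positivity)]
  · -- missed detection
    set g : ℕ → ℝ := fun N => Real.sqrt N * ρ N / lam - σ / Real.sqrt α with hgdef
    have hg : Tendsto g atTop atTop := by
      simp only [hgdef, sub_eq_add_neg]
      exact tendsto_atTop_add_const_right _ _ (hρω.atTop_div_const hlam)
    have hg2 : Tendsto (fun N => g N ^ 2) atTop atTop := by
      simpa [sq] using hg.atTop_mul_atTop₀ hg
    have hlim : Tendsto (fun N : ℕ => ENNReal.ofReal (σ ^ 2 / g N ^ 2)) atTop (nhds 0) := by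
      have h := ENNReal.tendsto_ofReal (tendsto_const_nhds.div_atTop hg2 (a := σ ^ 2))
      simpa using h
    apply tendsto_of_tendsto_of_tendsto_of_le_of_le' tendsto_const_nhds hlim
    · exact Eventually.of_forall fun N => zero_le
    · filter_upwards [eventually_ge_atTop 1, hg.eventually_gt_atTop 0] with N hN1 hgN
      obtain ⟨hr0, hr1⟩ := hρ N
      have h1r : 0 < 1 - ρ N := by linarith
      have hNpos : (0 : ℝ) < N := by exact_mod_cast hN1
      have hNN : Real.sqrt N * Real.sqrt N = (N : ℝ) := Real.mul_self_sqrt (by positivity)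
      have idU : U N = Real.sqrt N * (σ / Real.sqrt α) := by
        rw [hU, show ((N : ℝ) * σ ^ 2 / α) = (N : ℝ) * (σ ^ 2 / α) by ring,
          Real.sqrt_mul (by positivity), Real.sqrt_div (by positivity),
          Real.sqrt_sq hσ.le]
      have hgN' : g N = Real.sqrt N * ρ N / lam - σ / Real.sqrt α := by rw [hgdef]
      have ht : Real.sqrt N * g N = (N : ℝ) * ρ N / lam - U N := by
        rw [idU, hgN']
        field_simp
        linear_combination (ρ N * Real.sqrt α) * hNN
      have hc : 0 < Real.sqrt N * g N := mul_pos (Real.sqrt_pos.2 hNpos) hgN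
      have hc' : 0 < (N : ℝ) * ρ N / lam - U N := ht ▸ hc
      have hsub : {ω : Ω | (N : ℝ) / lam - U N ≤ (1 - ρ N) * ∑ i ∈ Finset.range N, A i ω}
          ⊆ {ω | Real.sqrt N * g N ≤ |(∑ i ∈ Finset.range N, A i ω) - (N : ℝ) / lam|} := by
        intro ω hω
        simp only [Set.mem_setOf_eq] at hω ⊢
        rw [ht]
        have key : (N : ℝ) * ρ N / lam - U N
            ≤ (∑ i ∈ Finset.range N, A i ω) - (N : ℝ) / lam := by
          have h2 : 0 ≤ (1 - ρ N) * ((∑ i ∈ Finset.range N, A i ω) - (N : ℝ) / lam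
              - ((N : ℝ) * ρ N / lam - U N)) := by
            have heq : (1 - ρ N) * ((∑ i ∈ Finset.range N, A i ω) - (N : ℝ) / lam
                  - ((N : ℝ) * ρ N / lam - U N))
                = ((1 - ρ N) * (∑ i ∈ Finset.range N, A i ω) - ((N : ℝ) / lam - U N))
                  + ρ N * ((N : ℝ) * ρ N / lam - U N) := by ring
            linarith [heq, hω, mul_pos hr0 hc']
          nlinarith [h2, h1r]
        exact key.trans (le_abs_self _)
      refine le_trans (measure_mono hsub) (le_trans (cheb N _ hc) ?_)
      apply le_of_eq
      congr 1
      rw [mul_pow, Real.sq_sqrt (by positivity : (0:ℝ) ≤ (N:ℝ)),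
        mul_div_mul_left _ _ (ne_of_gt hNpos)]
end
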